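/- If H₁ ⊆ H₂ are subgroups of G_A, then H₂^T ⊆ H₁^T, and the quotient groups H₂/H₁ and H₁^T/H₂^T are isomorphic (in particular they have the same, finite, order). -/

import Mathlib

open scoped BigOperators
open Matrix

noncomputable section

abbrev QZ : Type := AddCircle (1 : ℚ)

def qz : ℚ →+ QZ := QuotientAddGroup.mk' _

def GA {n : ℕ} (A : Matrix (Fin n) (Fin n) ℤ) : AddSubgroup (Fin n → QZ) where
  carrier := {g | ∀ i, ∑ j, A i j • g j = 0}
  zero_mem' := by intro i; simp
  add_mem' := by
    intro a b ha hb i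
    simp only [Pi.add_apply, smul_add, Finset.sum_add_distrib, ha i, hb i, add_zero]
  neg_mem' := by
    intro a ha i
    simp only [Pi.neg_apply, smul_neg, Finset.sum_neg_distrib, ha i, neg_zero]

def SLA {n : ℕ} (A : Matrix (Fin n) (Fin n) ℤ) : AddSubgroup (Fin n → QZ) where
  carrier := {g | g ∈ GA A ∧ ∑ i, g i = 0}
  zero_mem' := ⟨(GA A).zero_mem, by simp⟩
  add_mem' := by
    intro a b ha hb
    exact ⟨(GA A).add_mem ha.1 hb.1, by simp [Pi.add_apply, Finset.sum_add_distrib, ha.2, hb.2]⟩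
  neg_mem' := by
    intro a ha
    exact ⟨(GA A).neg_mem ha.1, by simp [Pi.neg_apply, Finset.sum_neg_distrib, ha.2]⟩

def jA {n : ℕ} (A : Matrix (Fin n) (Fin n) ℤ) : Fin n → QZ :=
  fun i => qz (((A.map (Int.cast : ℤ → ℚ))⁻¹).mulVec 1 i)

/-- `v : ℚ^n` is a lift of `g : (ℚ/ℤ)^n`. -/
def IsLift {n : ℕ} (v : Fin n → ℚ) (g : Fin n → QZ) : Prop := ∀ i, qz (v i) = g i

lemma qz_eq_zero_iff (q : ℚ) : qz q = 0 ↔ ∃ m : ℤ, (m : ℚ) = q := by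
  constructor
  · intro h
    have : q ∈ AddSubgroup.zmultiples (1 : ℚ) := by
      rwa [qz, QuotientAddGroup.mk'_apply, QuotientAddGroup.eq_zero_iff] at h
    obtain ⟨k, hk⟩ := this
    exact ⟨k, by simpa using hk⟩
  · rintro ⟨m, rfl⟩
    rw [qz, QuotientAddGroup.mk'_apply, QuotientAddGroup.eq_zero_iff]
    exact ⟨m, by simp⟩

lemma exists_lift {n : ℕ} (g : Fin n → QZ) : ∃ v : Fin n → ℚ, IsLift v g := by
  choose v hv using fun i => QuotientAddGroup.mk'_surjective _ (g i)
  exact ⟨v, hv⟩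

lemma row_int {n : ℕ} {A : Matrix (Fin n) (Fin n) ℤ} {h : Fin n → QZ} (hh : h ∈ GA A)
    {vh : Fin n → ℚ} (hl : IsLift vh h) (i : Fin n) :
    ∃ m : ℤ, (m : ℚ) = ∑ j, (A i j : ℚ) * vh j := by
  have h0 : qz (∑ j, (A i j : ℚ) * vh j) = 0 := by
    have := hh i
    calc qz (∑ j, (A i j : ℚ) * vh j) = ∑ j, A i j • qz (vh j) := by
          rw [map_sum]
          refine Finset.sum_congr rfl fun j _ => ?_
          rw [← map_zsmul qz, zsmul_eq_mul]
      _ = ∑ j, A i j • h j := by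
          refine Finset.sum_congr rfl fun j _ => by rw [hl j]
      _ = 0 := hh i
  exact (qz_eq_zero_iff _).1 h0

/-- The Berglund–Hübsch dual `H^T` of a subgroup `H ≤ G_A`: all `g ∈ G_{Aᵀ}` such that
for every `h ∈ H` and all lifts `ĝ, ĥ ∈ ℚ^n` of `g, h`, the number `∑ᵢⱼ ĝᵢ Aᵢⱼ ĥⱼ` is an
integer. -/
def dual {n : ℕ} (A : Matrix (Fin n) (Fin n) ℤ) (H : AddSubgroup (Fin n → QZ))
    (hH : H ≤ GA A) : AddSubgroup (Fin n → QZ) where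
  carrier := {g | g ∈ GA Aᵀ ∧ ∀ h ∈ H, ∀ vg vh : Fin n → ℚ, IsLift vg g → IsLift vh h →
    ∃ m : ℤ, (m : ℚ) = ∑ i, ∑ j, vg i * (A i j : ℚ) * vh j}
  zero_mem' := by
    refine ⟨(GA Aᵀ).zero_mem, ?_⟩
    intro h hh vg vh lg lh
    have hg : ∀ i, ∃ m : ℤ, (m : ℚ) = vg i := by
      intro i
      exact (qz_eq_zero_iff _).1 ((lg i).trans rfl)
    choose mg hmg using hg
    choose c hc using fun i => row_int (hH hh) lh i
    refine ⟨∑ i, mg i * c i, ?_⟩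
    push_cast
    calc (∑ i, (mg i : ℚ) * (c i : ℚ))
        = ∑ i, vg i * ∑ j, (A i j : ℚ) * vh j := by
          refine Finset.sum_congr rfl fun i _ => by rw [hmg i, hc i]
      _ = ∑ i, ∑ j, vg i * (A i j : ℚ) * vh j := by
          refine Finset.sum_congr rfl fun i _ => ?_
          rw [Finset.mul_sum]
          exact Finset.sum_congr rfl fun j _ => (mul_assoc _ _ _).symm
  add_mem' := by
    intro a b ha hb
    refine ⟨(GA Aᵀ).add_mem ha.1 hb.1, ?_⟩
    intro h hh vg vh lg lh
    obtain ⟨va, hva⟩ := exists_lift a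
    have hvb : IsLift (vg - va) b := by
      intro i
      have : qz (vg i - va i) = qz (vg i) - qz (va i) := map_sub qz _ _
      rw [Pi.sub_apply, this, lg i, hva i, Pi.add_apply, add_sub_cancel_left]
    obtain ⟨m₁, e₁⟩ := ha.2 h hh va vh hva lh
    obtain ⟨m₂, e₂⟩ := hb.2 h hh (vg - va) vh hvb lh
    refine ⟨m₁ + m₂, ?_⟩
    push_cast
    rw [e₁, e₂, ← Finset.sum_add_distrib]
    refine Finset.sum_congr rfl fun i _ => ?_
    rw [← Finset.sum_add_distrib]
    refine Finset.sum_congr rfl fun j _ => ?_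
    simp only [Pi.sub_apply]
    ring
  neg_mem' := by
    intro a ha
    refine ⟨(GA Aᵀ).neg_mem ha.1, ?_⟩
    intro h hh vg vh lg lh
    have hvg : IsLift (-vg) a := by
      intro i
      have : qz (-(vg i)) = - qz (vg i) := map_neg qz _
      rw [Pi.neg_apply, this, lg i, Pi.neg_apply, neg_neg]
    obtain ⟨m, e⟩ := ha.2 h hh (-vg) vh hvg lh
    refine ⟨-m, ?_⟩
    push_cast
    rw [e, ← Finset.sum_neg_distrib]
    refine Finset.sum_congr rfl fun i _ => ?_
    rw [← Finset.sum_neg_distrib]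
    refine Finset.sum_congr rfl fun j _ => ?_
    simp only [Pi.neg_apply]
    ring

lemma dual_le {n : ℕ} (A : Matrix (Fin n) (Fin n) ℤ) (H : AddSubgroup (Fin n → QZ))
    (hH : H ≤ GA A) : dual A H hH ≤ GA Aᵀ := fun _ hg => hg.1

lemma SLA_le {n : ℕ} (A : Matrix (Fin n) (Fin n) ℤ) : SLA A ≤ GA A := fun _ hg => hg.1


namespace BH

variable {n : ℕ}

lemma qz_intCast (m : ℤ) : qz (m : ℚ) = 0 := (qz_eq_zero_iff _).2 ⟨m, rfl⟩

lemma qz_one : qz (1 : ℚ) = 0 := by simpa using qz_intCast 1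

noncomputable def lift0 (g : Fin n → QZ) : Fin n → ℚ := (exists_lift g).choose

lemma lift0_spec (g : Fin n → QZ) : IsLift (lift0 g) g := (exists_lift g).choose_spec

/-- The bilinear sum. -/
def S (A : Matrix (Fin n) (Fin n) ℤ) (vg vh : Fin n → ℚ) : ℚ :=
  ∑ i, ∑ j, vg i * (A i j : ℚ) * vh j

lemma qz_sub_int {a b : ℚ} (h : qz a = qz b) : ∃ m : ℤ, (m : ℚ) = a - b := by
  have : qz (a - b) = 0 := by rw [map_sub, h, sub_self]
  exact (qz_eq_zero_iff _).1 this

lemma S_decomp (A : Matrix (Fin n) (Fin n) ℤ) (vg vg' vh vh' : Fin n → ℚ) :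
    S A vg' vh' - S A vg vh =
      (∑ i, (vg' i - vg i) * (∑ j, (A i j : ℚ) * vh' j)) +
      (∑ j, (vh' j - vh j) * (∑ i, (A i j : ℚ) * vg i)) := by
  have h2 : (∑ j, (vh' j - vh j) * (∑ i, (A i j : ℚ) * vg i)) =
      ∑ i, ∑ j, (vh' j - vh j) * ((A i j : ℚ) * vg i) := by
    rw [Finset.sum_comm]
    exact Finset.sum_congr rfl fun j _ => Finset.mul_sum _ _ _
  have h1 : (∑ i, (vg' i - vg i) * (∑ j, (A i j : ℚ) * vh' j)) =
      ∑ i, ∑ j, (vg' i - vg i) * ((A i j : ℚ) * vh' j) :=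
    Finset.sum_congr rfl fun i _ => Finset.mul_sum _ _ _
  rw [h1, h2, S, S, ← Finset.sum_sub_distrib, ← Finset.sum_add_distrib]
  refine Finset.sum_congr rfl fun i _ => ?_
  rw [← Finset.sum_sub_distrib, ← Finset.sum_add_distrib]
  exact Finset.sum_congr rfl fun j _ => by ring

lemma S_well_defined {A : Matrix (Fin n) (Fin n) ℤ} {g h : Fin n → QZ}
    (hg : g ∈ GA Aᵀ) (hh : h ∈ GA A) {vg vg' vh vh' : Fin n → ℚ}
    (lg : IsLift vg g) (lg' : IsLift vg' g) (lh : IsLift vh h) (lh' : IsLift vh' h) :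
    qz (S A vg' vh') = qz (S A vg vh) := by
  choose mg hmg using fun i => qz_sub_int ((lg' i).trans (lg i).symm)
  choose mh hmh using fun j => qz_sub_int ((lh' j).trans (lh j).symm)
  choose r hr using fun i => row_int hh lh' i
  choose c hc using fun j => row_int (A := Aᵀ) hg lg j
  have key : (((∑ i, mg i * r i + ∑ j, mh j * c j : ℤ) : ℚ)) = S A vg' vh' - S A vg vh := by
    rw [S_decomp A vg vg' vh vh']
    push_cast
    congr 1
    · exact Finset.sum_congr rfl fun i _ => by rw [hmg i, hr i]
    · refine Finset.sum_congr rfl fun j _ => ?_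
      rw [hmh j, hc j]
      simp [Matrix.transpose_apply]
  have : qz (S A vg' vh') - qz (S A vg vh) = 0 := by
    rw [← map_sub, ← key, qz_intCast]
  linear_combination (norm := abel) this

end BH
namespace BH

variable {n : ℕ} {A : Matrix (Fin n) (Fin n) ℤ}

/-- The pairing `G_{Aᵀ} × G_A → ℚ/ℤ`. -/
noncomputable def phi (A : Matrix (Fin n) (Fin n) ℤ) (g h : Fin n → QZ) : QZ :=
  qz (S A (lift0 g) (lift0 h))

lemma phi_eq {g h : Fin n → QZ} (hg : g ∈ GA Aᵀ) (hh : h ∈ GA A) {vg vh : Fin n → ℚ}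
    (lg : IsLift vg g) (lh : IsLift vh h) : phi A g h = qz (S A vg vh) :=
  S_well_defined hg hh lg (lift0_spec g) lh (lift0_spec h)

lemma isLift_add {v w : Fin n → ℚ} {g h : Fin n → QZ} (hv : IsLift v g) (hw : IsLift w h) :
    IsLift (v + w) (g + h) := fun i => by
  simp only [Pi.add_apply, map_add, hv i, hw i]

lemma S_add_left (vg vg' vh : Fin n → ℚ) :
    S A (vg + vg') vh = S A vg vh + S A vg' vh := by
  simp only [S, Pi.add_apply, add_mul, Finset.sum_add_distrib]

lemma S_add_right (vg vh vh' : Fin n → ℚ) :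
    S A vg (vh + vh') = S A vg vh + S A vg vh' := by
  simp only [S, Pi.add_apply, mul_add, Finset.sum_add_distrib]

lemma phi_add_left {g g' h : Fin n → QZ} (hg : g ∈ GA Aᵀ) (hg' : g' ∈ GA Aᵀ)
    (hh : h ∈ GA A) : phi A (g + g') h = phi A g h + phi A g' h := by
  rw [phi_eq ((GA Aᵀ).add_mem hg hg') hh (isLift_add (lift0_spec g) (lift0_spec g')) (lift0_spec h),
    phi_eq hg hh (lift0_spec g) (lift0_spec h), phi_eq hg' hh (lift0_spec g') (lift0_spec h),
    S_add_left, map_add]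

lemma phi_add_right {g h h' : Fin n → QZ} (hg : g ∈ GA Aᵀ) (hh : h ∈ GA A)
    (hh' : h' ∈ GA A) : phi A g (h + h') = phi A g h + phi A g h' := by
  rw [phi_eq hg ((GA A).add_mem hh hh') (lift0_spec g) (isLift_add (lift0_spec h) (lift0_spec h')),
    phi_eq hg hh (lift0_spec g) (lift0_spec h), phi_eq hg hh' (lift0_spec g) (lift0_spec h'),
    S_add_right, map_add]

lemma phi_eq_zero_iff {g h : Fin n → QZ} (hg : g ∈ GA Aᵀ) (hh : h ∈ GA A) :
    phi A g h = 0 ↔ ∀ vg vh : Fin n → ℚ, IsLift vg g → IsLift vh h →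
      ∃ m : ℤ, (m : ℚ) = S A vg vh := by
  constructor
  · intro h0 vg vh lg lh
    have := (phi_eq hg hh lg lh).symm.trans h0
    exact (qz_eq_zero_iff _).1 this
  · intro H
    obtain ⟨m, hm⟩ := H _ _ (lift0_spec g) (lift0_spec h)
    exact (qz_eq_zero_iff _).2 ⟨m, hm⟩

/-- Membership in the dual is equivalent to vanishing of `phi` on `H`. -/
lemma mem_dual_iff {H : AddSubgroup (Fin n → QZ)} (hH : H ≤ GA A) {g : Fin n → QZ} :
    g ∈ dual A H hH ↔ g ∈ GA Aᵀ ∧ ∀ h ∈ H, phi A g h = 0 := by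
  constructor
  · rintro ⟨h1, h2⟩
    exact ⟨h1, fun h hh => (phi_eq_zero_iff h1 (hH hh)).2 fun vg vh lg lh =>
      h2 h hh vg vh lg lh⟩
  · rintro ⟨h1, h2⟩
    exact ⟨h1, fun h hh vg vh lg lh => (phi_eq_zero_iff h1 (hH hh)).1 (h2 h hh) vg vh lg lh⟩

end BH
namespace BH

variable {n : ℕ} {A : Matrix (Fin n) (Fin n) ℤ}

/-- `A` over `ℚ`. -/
def Bq (A : Matrix (Fin n) (Fin n) ℤ) : Matrix (Fin n) (Fin n) ℚ :=
  A.map (Int.cast : ℤ → ℚ)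

lemma Bq_det_eq (A : Matrix (Fin n) (Fin n) ℤ) : (Bq A).det = (A.det : ℚ) :=
  (RingHom.map_det (Int.castRingHom ℚ) A).symm

lemma Bq_adj (A : Matrix (Fin n) (Fin n) ℤ) :
    (Bq A).adjugate = (A.adjugate).map (Int.cast : ℤ → ℚ) :=
  (RingHom.map_adjugate (Int.castRingHom ℚ) A).symm

lemma Bq_det (hA : A.det ≠ 0) : (Bq A).det ≠ 0 := by
  rw [Bq_det_eq]
  exact_mod_cast hA

lemma Bq_mul_inv (hA : A.det ≠ 0) : Bq A * (Bq A)⁻¹ = 1 :=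
  Matrix.mul_nonsing_inv _ (isUnit_iff_ne_zero.2 (Bq_det hA))

lemma Bq_inv_mul (hA : A.det ≠ 0) : (Bq A)⁻¹ * Bq A = 1 :=
  Matrix.nonsing_inv_mul _ (isUnit_iff_ne_zero.2 (Bq_det hA))

/-- The parametrization of `G_A` by integer vectors. -/
noncomputable def piv (A : Matrix (Fin n) (Fin n) ℤ) (m : Fin n → ℤ) : Fin n → QZ :=
  fun i => qz (((Bq A)⁻¹).mulVec (fun j => (m j : ℚ)) i)

lemma mulVec_apply (M : Matrix (Fin n) (Fin n) ℚ) (v : Fin n → ℚ) (i : Fin n) :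
    M.mulVec v i = ∑ j, M i j * v j := rfl

lemma piv_mem (hA : A.det ≠ 0) (m : Fin n → ℤ) : piv A m ∈ GA A := by
  intro i
  have : ∀ j, A i j • piv A m j = qz ((A i j : ℚ) * ((Bq A)⁻¹).mulVec (fun k => (m k : ℚ)) j) := by
    intro j
    rw [piv, ← map_zsmul qz, zsmul_eq_mul]
  rw [Finset.sum_congr rfl fun j _ => this j, ← map_sum]
  have : ∑ j, (A i j : ℚ) * ((Bq A)⁻¹).mulVec (fun k => (m k : ℚ)) j
      = (Bq A * (Bq A)⁻¹).mulVec (fun k => (m k : ℚ)) i := by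
    rw [← Matrix.mulVec_mulVec, mulVec_apply]
    exact Finset.sum_congr rfl fun j _ => rfl
  rw [this, Bq_mul_inv hA, Matrix.one_mulVec, qz_intCast]

lemma piv_surj (hA : A.det ≠ 0) {h : Fin n → QZ} (hh : h ∈ GA A) :
    ∃ m : Fin n → ℤ, piv A m = h ∧ IsLift (((Bq A)⁻¹).mulVec (fun j => ((m j : ℚ)))) h := by
  obtain ⟨vh, lh⟩ := exists_lift h
  choose m hm using fun i => row_int hh lh i
  have hB : (Bq A).mulVec vh = fun i => (m i : ℚ) := by
    funext i
    rw [mulVec_apply]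
    rw [hm i]
    exact Finset.sum_congr rfl fun j _ => rfl
  have hv : ((Bq A)⁻¹).mulVec (fun j => ((m j : ℚ))) = vh := by
    rw [← hB, Matrix.mulVec_mulVec, Bq_inv_mul hA, Matrix.one_mulVec]
  refine ⟨m, ?_, ?_⟩
  · funext i
    rw [piv, hv]
    exact lh i
  · rw [hv]; exact lh

lemma piv_add (m m' : Fin n → ℤ) : piv A (m + m') = piv A m + piv A m' := by
  funext i
  have : (fun j => ((m + m') j : ℚ)) = (fun j => (m j : ℚ)) + fun j => (m' j : ℚ) := by
    funext j; simp
  rw [Pi.add_apply, piv, piv, piv, this, Matrix.mulVec_add, Pi.add_apply, map_add]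

lemma piv_det_smul (hA : A.det ≠ 0) (m : Fin n → ℤ) : piv A (A.det • m) = 0 := by
  funext i
  have key : ((Bq A)⁻¹).mulVec (fun j => ((A.det • m) j : ℚ))
      = fun i => ((A.adjugate.mulVec m i : ℤ) : ℚ) := by
    have h1 : (fun j => ((A.det • m) j : ℚ)) = (A.det : ℚ) • fun j => (m j : ℚ) := by
      funext j
      simp only [Pi.smul_apply, smul_eq_mul]
      push_cast
      ring
    rw [h1, Matrix.mulVec_smul]
    have h2 : (A.det : ℚ) • ((Bq A)⁻¹).mulVec (fun j => (m j : ℚ))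
        = ((A.det : ℚ) • (Bq A)⁻¹).mulVec (fun j => (m j : ℚ)) := by
      rw [Matrix.smul_mulVec]
    rw [h2]
    have hdet := Bq_det_eq A
    have h3 : (A.det : ℚ) • (Bq A)⁻¹ = (Bq A).adjugate := by
      rw [Matrix.inv_def, hdet, smul_smul, Ring.inverse_eq_inv,
        mul_inv_cancel₀ (by exact_mod_cast hA), one_smul]
    rw [h3]
    have h4 := Bq_adj A
    funext i
    rw [h4, mulVec_apply, show ((A.adjugate *ᵥ m) i) = ∑ j, A.adjugate i j * m j from rfl]
    push_cast
    exact Finset.sum_congr rfl fun j _ => by rw [Matrix.map_apply]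
  rw [piv, key, qz_intCast, Pi.zero_apply]

lemma piv_congr (hA : A.det ≠ 0) {m m' : Fin n → ℤ}
    (hmm : ∀ i, (A.det : ℤ) ∣ (m' i - m i)) : piv A m' = piv A m := by
  choose t ht using hmm
  have : m' = m + A.det • t := by
    funext i
    have := ht i
    simp only [Pi.add_apply, Pi.smul_apply, smul_eq_mul]
    omega
  rw [this, piv_add, piv_det_smul hA, add_zero]

lemma finite_GA (hA : A.det ≠ 0) : Finite (GA A) := by
  haveI : NeZero A.det.natAbs := ⟨Int.natAbs_ne_zero.2 hA⟩
  set D := A.det.natAbs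
  have hsurj : Function.Surjective
      (fun k : Fin n → ZMod D => (⟨piv A (fun i => ((k i).val : ℤ)), piv_mem hA _⟩ : GA A)) := by
    rintro ⟨h, hh⟩
    obtain ⟨m, hm, -⟩ := piv_surj hA hh
    refine ⟨fun i => ((m i : ZMod D)), Subtype.ext ?_⟩
    simp only
    rw [piv_congr hA (m := m), hm]
    intro i
    have h5 : (((((m i : ZMod D)).val : ℤ)) : ZMod D) = ((m i : ZMod D)) := by
      rw [Int.cast_natCast, ZMod.natCast_val, ZMod.cast_id]
    have h6 := ((ZMod.intCast_eq_intCast_iff _ _ _).1 h5).symm.dvd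
    exact (Int.natAbs_dvd).1 h6
  exact Finite.of_surjective _ hsurj

end BH
namespace BH

variable {n : ℕ} {A : Matrix (Fin n) (Fin n) ℤ}

/-- `piv` as an `AddMonoidHom` into `G_A`. -/
noncomputable def pivHom (A : Matrix (Fin n) (Fin n) ℤ) (hA : A.det ≠ 0) :
    (Fin n → ℤ) →+ GA A :=
  AddMonoidHom.mk' (fun m => ⟨piv A m, piv_mem hA m⟩)
    (fun m m' => Subtype.ext (piv_add m m'))

/-- Every character of `G_A` is represented by an element of `G_{Aᵀ}`. -/
lemma exists_rep (hA : A.det ≠ 0) (χ : GA A →+ QZ) :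
    ∃ g : Fin n → QZ, g ∈ GA Aᵀ ∧ ∀ h : GA A, phi A g (h : Fin n → QZ) = χ h := by
  classical
  choose w hw using fun j : Fin n =>
    QuotientAddGroup.mk'_surjective (AddSubgroup.zmultiples (1 : ℚ))
      (χ (pivHom A hA (Pi.single j 1)))
  set g : Fin n → QZ := fun j => qz (w j) with hg_def
  have lg : IsLift w g := fun j => rfl
  set ψ : (Fin n → ℤ) →+ QZ := AddMonoidHom.mk'
    (fun m => qz (∑ j, w j * (m j : ℚ)))
    (by
      intro m m'
      show qz (∑ j, w j * (((m + m') j : ℤ) : ℚ))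
          = qz (∑ j, w j * ((m j : ℤ) : ℚ)) + qz (∑ j, w j * ((m' j : ℤ) : ℚ))
      have key : (∑ j, w j * (((m + m') j : ℤ) : ℚ))
          = (∑ j, w j * ((m j : ℤ) : ℚ)) + ∑ j, w j * ((m' j : ℤ) : ℚ) := by
        rw [← Finset.sum_add_distrib]
        refine Finset.sum_congr rfl fun j _ => ?_
        have : (((m + m') j : ℤ) : ℚ) = ((m j : ℤ) : ℚ) + ((m' j : ℤ) : ℚ) := by
          simp
        rw [this]; ring
      rw [key, map_add]) with hψ_def
  have hχπ : χ.comp (pivHom A hA) = ψ := by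
    refine AddMonoidHom.functions_ext (I := Fin n) (M := fun _ => ℤ) QZ _ _ (fun j x => ?_)
    have hsingle : (Pi.single j x : Fin n → ℤ) = x • Pi.single j (1 : ℤ) := by
      rw [← Pi.single_smul, smul_eq_mul, mul_one]
    rw [hsingle, map_zsmul, map_zsmul]
    have h1 : (χ.comp (pivHom A hA)) (Pi.single j 1) = qz (w j) := (hw j).symm
    have h2 : ψ (Pi.single j 1) = qz (w j) := by
      show qz (∑ i, w i * (((Pi.single j (1:ℤ) : Fin n → ℤ) i : ℤ) : ℚ)) = qz (w j)
      congr 1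
      rw [Finset.sum_eq_single j]
      · simp
      · intro i _ hij
        rw [Pi.single_eq_of_ne hij]
        simp
      · simp
    rw [h1, h2]
  have hψ_apply : ∀ m : Fin n → ℤ, χ (pivHom A hA m) = qz (∑ j, w j * (m j : ℚ)) := by
    intro m
    have := congrArg (fun f : (Fin n → ℤ) →+ QZ => f m) hχπ
    exact this
  have hg : g ∈ GA Aᵀ := by
    intro i
    -- column of A
    set m : Fin n → ℤ := fun k => A k i with hm_def
    have hπm : piv A m = 0 := by
      funext k
      have hcol : (fun j => ((m j : ℚ))) = (Bq A).mulVec (fun j => if j = i then 1 else 0) := by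
        funext k'
        rw [mulVec_apply, Finset.sum_eq_single i]
        · simp [Bq, Matrix.map_apply, hm_def]
        · intro b _ hb; simp [hb]
        · simp
      rw [piv, hcol, Matrix.mulVec_mulVec, Bq_inv_mul hA, Matrix.one_mulVec]
      by_cases hk : k = i
      · simp [hk, qz_one]
      · simp [hk]
    have hzero : χ (pivHom A hA m) = 0 := by
      have : pivHom A hA m = 0 := Subtype.ext hπm
      rw [this, map_zero]
    have : qz (∑ j, w j * ((m j : ℚ))) = 0 := by rw [← hψ_apply m, hzero]
    calc ∑ j, Aᵀ i j • g j = qz (∑ j, w j * ((m j : ℚ))) := by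
          rw [map_sum]
          refine Finset.sum_congr rfl fun j _ => ?_
          rw [hg_def, ← map_zsmul qz, zsmul_eq_mul]
          congr 1
          rw [Matrix.transpose_apply, hm_def]
          ring
      _ = 0 := this
  refine ⟨g, hg, ?_⟩
  rintro ⟨h, hh⟩
  obtain ⟨m, hm, lh⟩ := piv_surj hA hh
  set vh := ((Bq A)⁻¹).mulVec (fun j => ((m j : ℚ))) with hvh
  have : phi A g h = qz (S A w vh) := phi_eq hg hh lg lh
  rw [this]
  have hS : S A w vh = ∑ j, w j * (m j : ℚ) := by
    rw [S]
    have : ∀ i, ∑ j, w i * (A i j : ℚ) * vh j = w i * ((Bq A).mulVec vh i) := by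
      intro i
      rw [mulVec_apply, Finset.mul_sum]
      refine Finset.sum_congr rfl fun j _ => ?_
      rw [Bq, Matrix.map_apply]
      ring
    rw [Finset.sum_congr rfl fun i _ => this i]
    have hBv : (Bq A).mulVec vh = fun j => ((m j : ℚ)) := by
      rw [hvh, Matrix.mulVec_mulVec, Bq_mul_inv hA, Matrix.one_mulVec]
    rw [hBv]
  rw [hS, ← hψ_apply m]
  have : pivHom A hA m = ⟨h, hh⟩ := Subtype.ext hm
  rw [this]

end BH
namespace BH

/-- Extension of characters along injections, by injectivity (divisibility) of `ℚ/ℤ`. -/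
lemma extend_char {M N : Type} [AddCommGroup M] [AddCommGroup N] (i : M →+ N)
    (hi : Function.Injective i) (f : M →+ QZ) : ∃ F : N →+ QZ, ∀ x, F (i x) = f x := by
  obtain ⟨F, hF⟩ := (Module.Baer.of_divisible (AddCircle (1 : ℚ))).extension_property
    i.toIntLinearMap hi f.toIntLinearMap
  exact ⟨F.toAddMonoidHom, fun x => LinearMap.ext_iff.1 hF x⟩

/-- The canonical injection `ZMod N → ℚ/ℤ`, `k ↦ k/N`. -/
noncomputable def eps (N : ℕ) (hN : N ≠ 0) : ZMod N →+ QZ :=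
  ZMod.lift N ⟨qz.comp ((AddMonoidHom.mk' (fun q : ℚ => q / N) (fun a b => add_div a b N)).comp
      (Int.castAddHom ℚ)), by
    show qz (((N : ℤ) : ℚ) / N) = 0
    rw [show (((N : ℤ) : ℚ) / N) = 1 by
      push_cast
      exact div_self (by exact_mod_cast hN)]
    exact qz_one⟩

lemma eps_intCast (N : ℕ) (hN : N ≠ 0) (t : ℤ) :
    eps N hN ((t : ZMod N)) = qz ((t : ℚ) / N) := by
  rw [eps, show ((t : ZMod N)) = Int.castAddHom (ZMod N) t from rfl, ZMod.lift_castAddHom]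
  rfl

lemma eps_injective (N : ℕ) (hN : N ≠ 0) : Function.Injective (eps N hN) := by
  haveI : NeZero N := ⟨hN⟩
  intro a b hab
  have h0 : eps N hN (a - b) = 0 := by rw [map_sub, hab, sub_self]
  set c := a - b with hc
  have hcast : c = (((c.val : ℤ)) : ZMod N) := by
    rw [Int.cast_natCast, ZMod.natCast_val, ZMod.cast_id]
  rw [hcast, eps_intCast] at h0
  obtain ⟨m, hm⟩ := (qz_eq_zero_iff _).1 h0
  have hN' : (N : ℚ) ≠ 0 := by exact_mod_cast hN
  rw [Int.cast_natCast] at hm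
  have hNq : ((c.val : ℤ)) = m * N := by
    exact_mod_cast ((eq_div_iff hN').1 hm).symm
  have hNdvd : (N : ℤ) ∣ (c.val : ℤ) := ⟨m, by rw [hNq, mul_comm]⟩
  have hdvd : N ∣ c.val := by exact_mod_cast hNdvd
  have hlt : c.val < N := ZMod.val_lt c
  have hval : c.val = 0 := by
    rcases Nat.eq_zero_or_pos c.val with h | h
    · exact h
    · exact absurd (Nat.le_of_dvd h hdvd) (not_le.2 hlt)
  have hc0 : c = 0 := (ZMod.val_eq_zero c).1 hval
  exact sub_eq_zero.1 (hc ▸ hc0)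

end BH
namespace BH

/-- The pairing map `ZMod N →+ (ZMod N →+ QZ)`. -/
noncomputable def psiZMod (N : ℕ) (hN : N ≠ 0) : ZMod N →+ (ZMod N →+ QZ) :=
  AddMonoidHom.mk' (fun k => (eps N hN).comp (AddMonoidHom.mulLeft k))
    (by
      intro k k'
      ext z
      show eps N hN ((k + k') * z) = eps N hN (k * z) + eps N hN (k' * z)
      rw [add_mul, map_add])

lemma psiZMod_bijective (N : ℕ) (hN : N ≠ 0) : Function.Bijective (psiZMod N hN) := by
  haveI : NeZero N := ⟨hN⟩
  constructor
  · intro k k' hkk'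
    have h1 : eps N hN (k * 1) = eps N hN (k' * 1) :=
      congrArg (fun f : ZMod N →+ QZ => f 1) hkk'
    rw [mul_one, mul_one] at h1
    exact eps_injective N hN h1
  · intro f
    set x := f 1 with hx
    have hsmul : ∀ z : ZMod N, f z = z.val • x := by
      intro z
      have hz : z = z.val • (1 : ZMod N) := by
        rw [nsmul_eq_mul, mul_one, ZMod.natCast_val, ZMod.cast_id]
      rw [hz, map_nsmul, ← hz]
    obtain ⟨q, hq⟩ := QuotientAddGroup.mk'_surjective (AddSubgroup.zmultiples (1 : ℚ)) x
    have hNx : qz ((N : ℚ) * q) = 0 := by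
      have h1 : (N : ℕ) • x = 0 := by
        have : (N : ℕ) • (1 : ZMod N) = 0 := by
          rw [nsmul_eq_mul, mul_one, ZMod.natCast_self]
        rw [hx, ← map_nsmul, this, map_zero]
      have h2 : qz ((N : ℚ) * q) = (N : ℕ) • x := by
        rw [← hq, ← map_nsmul]
        congr 1
      rw [h2, h1]
    obtain ⟨m, hm⟩ := (qz_eq_zero_iff _).1 hNx
    have hN' : (N : ℚ) ≠ 0 := by exact_mod_cast hN
    have hqm : q = (m : ℚ) / N := by
      field_simp
      linarith [hm]
    refine ⟨(m : ZMod N), ?_⟩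
    ext z
    show eps N hN ((m : ZMod N) * z) = f z
    have hz' : ((m : ZMod N)) * z = (((m * z.val : ℤ)) : ZMod N) := by
      push_cast
      rw [ZMod.natCast_val, ZMod.cast_id]
    rw [hz', eps_intCast, hsmul z]
    have : ((m * (z.val : ℤ) : ℤ) : ℚ) / N = z.val • ((m : ℚ) / N) := by
      rw [nsmul_eq_mul]
      push_cast
      ring
    rw [this, map_nsmul, ← hqm]
    exact congrArg (fun t => z.val • t) hq

lemma zmod_char_equiv (N : ℕ) (hN : N ≠ 0) : Nonempty ((ZMod N →+ QZ) ≃+ ZMod N) :=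
  ⟨(AddEquiv.ofBijective (psiZMod N hN) (psiZMod_bijective N hN)).symm⟩

/-- Precomposition equivalence on character groups. -/
def homCongr {M N : Type} [AddCommGroup M] [AddCommGroup N] (e : M ≃+ N) :
    (M →+ QZ) ≃+ (N →+ QZ) where
  toFun f := f.comp e.symm.toAddMonoidHom
  invFun f := f.comp e.toAddMonoidHom
  left_inv f := by ext x; simp
  right_inv f := by ext x; simp
  map_add' f g := by ext x; rfl

/-- Any finite abelian group is isomorphic to its character group. -/
lemma char_equiv (G : Type) [AddCommGroup G] [Finite G] :
    Nonempty (G ≃+ (G →+ QZ)) := by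
  classical
  obtain ⟨ι, hι, nn, h1, ⟨e⟩⟩ := AddCommGroup.equiv_directSum_zmod_of_finite' G
  have hnz : ∀ i, nn i ≠ 0 := fun i => by have := h1 i; omega
  let ee := fun i => (zmod_char_equiv (nn i) (hnz i)).some
  let E1 : (G →+ QZ) ≃+ ((DirectSum ι (fun i => ZMod (nn i))) →+ QZ) := homCongr e
  let E2 : ((DirectSum ι (fun i => ZMod (nn i))) →+ QZ) ≃+ (∀ i, ZMod (nn i) →+ QZ) :=
    (DFinsupp.liftAddHom (β := fun i => ZMod (nn i)) (γ := QZ)).symm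
  let E3 : (∀ i, ZMod (nn i) →+ QZ) ≃+ (∀ i, ZMod (nn i)) := AddEquiv.piCongrRight ee
  let d : (DirectSum ι (fun i => ZMod (nn i))) ≃+ (∀ i, ZMod (nn i)) :=
    (DirectSum.linearEquivFunOnFintype ℤ ι (fun i => ZMod (nn i))).toAddEquiv
  exact ⟨e.trans (d.trans (E3.symm.trans (E2.symm.trans E1.symm)))⟩

end BH
open BH in
/-- if `H₁ ⊆ H₂ ⊆ G_A` then `H₂^T ⊆ H₁^T` and `H₂/H₁ ≅ H₁^T/H₂^T`
(in particular these quotients have the same, finite, order). -/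
theorem dual_antitone_quotient_iso {n : ℕ} (hn : 1 ≤ n) (A : Matrix (Fin n) (Fin n) ℤ)
    (hA : A.det ≠ 0) (H₁ H₂ : AddSubgroup (Fin n → QZ))
    (hH₁ : H₁ ≤ GA A) (hH₂ : H₂ ≤ GA A) (h12 : H₁ ≤ H₂) :
    dual A H₂ hH₂ ≤ dual A H₁ hH₁ ∧
    Finite (H₂ ⧸ H₁.addSubgroupOf H₂) ∧
    Nonempty ((H₂ ⧸ H₁.addSubgroupOf H₂) ≃+
      (dual A H₁ hH₁ ⧸ (dual A H₂ hH₂).addSubgroupOf (dual A H₁ hH₁))) := by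
  classical
  haveI hGAfin : Finite (GA A) := finite_GA hA
  haveI hH2fin : Finite H₂ :=
    Finite.of_injective (AddSubgroup.inclusion hH₂) (AddSubgroup.inclusion_injective hH₂)
  refine ⟨?_, ?_, ?_⟩
  · rintro g ⟨hg1, hg2⟩
    exact ⟨hg1, fun h hh => hg2 h (h12 hh)⟩
  · exact Quotient.finite _
  -- the isomorphism
  have memT : ∀ g : dual A H₁ hH₁, (g : Fin n → QZ) ∈ GA Aᵀ := fun g => g.2.1
  let c : dual A H₁ hH₁ → (H₂ →+ QZ) := fun g => AddMonoidHom.mk'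
    (fun h => phi A g.1 h.1)
    (fun h h' => phi_add_right (memT g) (hH₂ h.2) (hH₂ h'.2))
  have hc_vanish : ∀ (g : dual A H₁ hH₁) (h : H₂), h ∈ H₁.addSubgroupOf H₂ → c g h = 0 := by
    intro g h hh
    have hmem : (h : Fin n → QZ) ∈ H₁ := AddSubgroup.mem_addSubgroupOf.1 hh
    exact (phi_eq_zero_iff (memT g) (hH₂ h.2)).2 (fun vg vh lg lh => g.2.2 _ hmem vg vh lg lh)
  let ρ : dual A H₁ hH₁ →+ ((H₂ ⧸ H₁.addSubgroupOf H₂) →+ QZ) := AddMonoidHom.mk'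
    (fun g => QuotientAddGroup.lift (H₁.addSubgroupOf H₂) (c g) (hc_vanish g))
    (by
      intro g g'
      ext h
      show phi A (g.1 + g'.1) h.1 = phi A g.1 h.1 + phi A g'.1 h.1
      exact phi_add_left (memT g) (memT g') (hH₂ h.2))
  have hker : ρ.ker = (dual A H₂ hH₂).addSubgroupOf (dual A H₁ hH₁) := by
    ext g
    constructor
    · intro hg
      have hall : ∀ h : H₂, phi A g.1 h.1 = 0 := by
        intro h
        have h0 := AddMonoidHom.mem_ker.1 hg
        have := congrArg
          (fun f : (H₂ ⧸ H₁.addSubgroupOf H₂) →+ QZ => f (QuotientAddGroup.mk h)) h0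
        exact this
      exact AddSubgroup.mem_addSubgroupOf.2
        ((mem_dual_iff hH₂).2 ⟨memT g, fun h hh => hall ⟨h, hh⟩⟩)
    · intro hg
      have hmem := AddSubgroup.mem_addSubgroupOf.1 hg
      have hphi := ((mem_dual_iff hH₂).1 hmem).2
      refine AddMonoidHom.mem_ker.2 ?_
      ext h
      show phi A g.1 h.1 = 0
      exact hphi h.1 h.2
  have hsurj : Function.Surjective ρ := by
    intro χ
    let χ₂ : H₂ →+ QZ := χ.comp (QuotientAddGroup.mk' (H₁.addSubgroupOf H₂))
    obtain ⟨χG, hχG⟩ := extend_char (AddSubgroup.inclusion hH₂)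
      (AddSubgroup.inclusion_injective hH₂) χ₂
    obtain ⟨g, hgT, hrep⟩ := exists_rep hA χG
    have hphi2 : ∀ h : H₂, phi A g h.1 = χ₂ h := by
      intro h
      have h1 := hrep (AddSubgroup.inclusion hH₂ h)
      rw [hχG h] at h1
      exact h1
    have hgD1 : g ∈ dual A H₁ hH₁ := by
      refine (mem_dual_iff hH₁).2 ⟨hgT, ?_⟩
      intro h hh
      have h2 : phi A g h = χ₂ ⟨h, h12 hh⟩ := hphi2 ⟨h, h12 hh⟩
      rw [h2]
      show χ (QuotientAddGroup.mk' (H₁.addSubgroupOf H₂) ⟨h, h12 hh⟩) = 0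
      have h3 : (QuotientAddGroup.mk' (H₁.addSubgroupOf H₂) ⟨h, h12 hh⟩ :
          H₂ ⧸ H₁.addSubgroupOf H₂) = 0 :=
        (QuotientAddGroup.eq_zero_iff _).2 (AddSubgroup.mem_addSubgroupOf.2 hh)
      rw [h3, map_zero]
    refine ⟨⟨g, hgD1⟩, ?_⟩
    ext h
    show phi A g h.1 = χ (QuotientAddGroup.mk h)
    rw [hphi2 h]
    rfl
  let E := QuotientAddGroup.quotientKerEquivOfSurjective ρ hsurj
  let eqv : (dual A H₁ hH₁ ⧸ (dual A H₂ hH₂).addSubgroupOf (dual A H₁ hH₁)) ≃+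
      ((H₂ ⧸ H₁.addSubgroupOf H₂) →+ QZ) :=
    (QuotientAddGroup.quotientAddEquivOfEq hker.symm).trans E
  obtain ⟨EK⟩ := char_equiv (H₂ ⧸ H₁.addSubgroupOf H₂)
  exact ⟨EK.trans eqv.symm⟩
end
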